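/- arXiv:1606.04775 — 4 statements merged into one kernel-verified Lean document; each statement's English description precedes it below -/
import Mathlib

section
/- With the braided tensor product algebra A ⊔ B := A ⊗ B of braided-commutative ℤⁿ-graded algebras (product (a⊗b)(a'⊗b') = R(deg a', deg b) (aa')⊗(bb')), the maps ι₁ : A → A ⊔ B, a ↦ a ⊗ 1_B and ι₂ : B → A ⊔ B, b ↦ 1_A ⊗ b are graded algebra morphisms, and A ⊔ B with (ι₁, ι₂) is the coproduct of A and B in the category of braided-commutative ℤⁿ-graded K-algebras: for any pair of graded algebra morphisms φ : A → C, ψ : B → C into a braided-commutative ℤⁿ-graded algebra C, there is a unique graded algebra morphism χ : A ⊔ B → C with χ ∘ ι₁ = φ and χ ∘ ι₂ = ψ. -/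
open scoped TensorProduct
open TensorProduct

noncomputable section

universe u v w

/-- A bicharacter on `ℤⁿ` with values in `Kˣ`. -/
def IsBicharacter {n : ℕ} {K : Type*} [Field K]
    (R : (Fin n → ℤ) → (Fin n → ℤ) → Kˣ) : Prop :=
  (∀ m m' p, R (m + m') p = R m p * R m' p) ∧
  (∀ m p p', R m (p + p') = R m p * R m p')

/-- A skew-symmetric bicharacter: `R(m,p) R(p,m) = 1`. -/
def IsSkewBicharacter {n : ℕ} {K : Type*} [Field K]
    (R : (Fin n → ℤ) → (Fin n → ℤ) → Kˣ) : Prop :=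
  IsBicharacter R ∧ ∀ m p, R m p * R p m = 1

/-- Braided commutativity of a `ℤⁿ`-graded algebra:
`a·a' = R(deg a', deg a) a'·a` for homogeneous elements. -/
def BraidedComm {n : ℕ} {K : Type*} [Field K] (R : (Fin n → ℤ) → (Fin n → ℤ) → Kˣ)
    {A : Type*} [Ring A] [Algebra K A] (𝒜 : (Fin n → ℤ) → Submodule K A) : Prop :=
  ∀ p q, ∀ a ∈ 𝒜 p, ∀ b ∈ 𝒜 q, a * b = ((R q p : Kˣ) : K) • (b * a)

/-- A degree-preserving (graded) map. -/
def IsGradedMap {n : ℕ} {K : Type*} [Field K] {A B : Type*}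
    [AddCommMonoid A] [Module K A] [AddCommMonoid B] [Module K B]
    (𝒜 : (Fin n → ℤ) → Submodule K A) (ℬ : (Fin n → ℤ) → Submodule K B)
    (f : A → B) : Prop :=
  ∀ p, ∀ a ∈ 𝒜 p, f a ∈ ℬ p

/-- The grading on a tensor product: `(A ⊗ B)^p = ⨆_q A^q ⊗ B^(p-q)`. -/
def tensorGrade {n : ℕ} {K : Type*} [Field K] {A B : Type*}
    [AddCommGroup A] [Module K A] [AddCommGroup B] [Module K B]
    (𝒜 : (Fin n → ℤ) → Submodule K A) (ℬ : (Fin n → ℤ) → Submodule K B)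
    (p : Fin n → ℤ) : Submodule K (A ⊗[K] B) :=
  ⨆ q, LinearMap.range (TensorProduct.map (𝒜 q).subtype (ℬ (p - q)).subtype)

/-- The grading on `K[x]` with `x` of degree `0`: everything sits in degree zero. -/
def unitGrade {n : ℕ} (K : Type*) [Field K] (p : Fin n → ℤ) : Submodule K (Polynomial K) :=
  if p = 0 then ⊤ else ⊥

/-- The grading on the dual numbers `K[x]/(x²)` with `x` of degree `0`. -/
def dualGrade {n : ℕ} (K : Type*) [Field K] (p : Fin n → ℤ) : Submodule K (DualNumber K) :=
  if p = 0 then ⊤ else ⊥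

/-- The grading on `K[x]` with `x` of degree `m`: the degree `p` part is spanned by
those `x^k` with `k • m = p`. -/
def polyGradeGen {n : ℕ} (K : Type*) [Field K] (m : Fin n → ℤ) (p : Fin n → ℤ) :
    Submodule K (Polynomial K) :=
  Submodule.span K {f : Polynomial K | ∃ k : ℕ, k • m = p ∧ f = Polynomial.X ^ k}

/-- The relation defining the localization `A[s⁻¹] = (A ⊗ K[x])/(s ⊗ x - 1)`. -/
def locRel (K : Type*) [Field K] {A : Type*} [Ring A] [Algebra K A] (s : A) :
    A ⊗[K] Polynomial K → A ⊗[K] Polynomial K → Prop :=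
  fun u v => u = s ⊗ₜ Polynomial.X ∧ v = 1

/-- The localization `A[s⁻¹] := (A ⊗ K[x])/(s ⊗ x − 1)`. -/
abbrev Loc (K : Type*) [Field K] (A : Type*) [Ring A] [Algebra K A] (s : A) : Type _ :=
  RingQuot (locRel K s)

/-- The canonical morphism `ℓ_s : A → A[s⁻¹]`, `a ↦ [a ⊗ 1]`. -/
noncomputable def locHom (K : Type*) [Field K] {A : Type*} [Ring A] [Algebra K A] (s : A) :
    A →ₐ[K] Loc K A s :=
  (RingQuot.mkAlgHom K (locRel K s)).comp Algebra.TensorProduct.includeLeft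

/-- The inverse `[1 ⊗ x]` of `ℓ_s(s)` in `A[s⁻¹]`. -/
noncomputable def locInv (K : Type*) [Field K] {A : Type*} [Ring A] [Algebra K A] (s : A) :
    Loc K A s :=
  RingQuot.mkAlgHom K (locRel K s) (1 ⊗ₜ Polynomial.X)

/-- The induced grading on the localization `A[s⁻¹]`. -/
noncomputable def locGrade {n : ℕ} (K : Type*) [Field K] {A : Type*} [Ring A] [Algebra K A]
    (𝒜 : (Fin n → ℤ) → Submodule K A) (s : A) (p : Fin n → ℤ) : Submodule K (Loc K A s) :=
  (tensorGrade 𝒜 (unitGrade K) p).map (RingQuot.mkAlgHom K (locRel K s)).toLinearMap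

/-- A realization `T` of the braided tensor product algebra `A ⊔ B`:
a linear isomorphism `e : A ⊗ B ≃ T` carrying unit `1 ⊗ 1`, the braided product
`e(a⊗b) e(a'⊗b') = R(deg a', deg b) e((aa') ⊗ (bb'))` and the tensor product grading. -/
structure BraidedTensor {n : ℕ} {K : Type*} [Field K]
    (R : (Fin n → ℤ) → (Fin n → ℤ) → Kˣ)
    {A B T : Type*} [Ring A] [Algebra K A] [Ring B] [Algebra K B] [Ring T] [Algebra K T]
    (𝒜 : (Fin n → ℤ) → Submodule K A) (ℬ : (Fin n → ℤ) → Submodule K B)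
    (𝒯 : (Fin n → ℤ) → Submodule K T) where
  e : A ⊗[K] B ≃ₗ[K] T
  one_def : e (1 ⊗ₜ 1) = 1
  mul_def : ∀ p q p' q', ∀ a ∈ 𝒜 p, ∀ b ∈ ℬ q, ∀ a' ∈ 𝒜 p', ∀ b' ∈ ℬ q',
    e (a ⊗ₜ b) * e (a' ⊗ₜ b') = ((R p' q : Kˣ) : K) • e ((a * a') ⊗ₜ (b * b'))
  grade_def : ∀ p, (tensorGrade 𝒜 ℬ p).map e.toLinearMap = 𝒯 p

/-- The `B ⊔ A`-valued derivations `ᴴDer(A, B ⊔ A)` (here `T` realizes `B ⊔ A` via `e`):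
degree-preserving linear maps satisfying the Leibniz rule along `a ↦ 1_B ⊗ a`. -/
def IsHDer {n : ℕ} {K : Type*} [Field K] {A B T : Type*}
    [Ring A] [Algebra K A] [Ring B] [Algebra K B] [Ring T] [Algebra K T]
    (𝒜 : (Fin n → ℤ) → Submodule K A) (e : B ⊗[K] A ≃ₗ[K] T)
    (𝒯 : (Fin n → ℤ) → Submodule K T) (v : A →ₗ[K] T) : Prop :=
  (∀ p, ∀ a ∈ 𝒜 p, v a ∈ 𝒯 p) ∧
  ∀ a a' : A, v (a * a') = v a * e (1 ⊗ₜ a') + e (1 ⊗ₜ a) * v a'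

/-- The composite `(μ_B ⊗ id_A) ∘ (id_B ⊗ v) ∘ w` entering the bracket of `ᴴDer(A, B ⊔ A)`. -/
noncomputable def hderMul {K : Type*} [Field K] {A B T : Type*}
    [Ring A] [Algebra K A] [Ring B] [Algebra K B] [Ring T] [Algebra K T]
    (e : B ⊗[K] A ≃ₗ[K] T) (v w : A →ₗ[K] T) : A →ₗ[K] T :=
  LinearMap.mul' K T ∘ₗ
    TensorProduct.map (e.toLinearMap ∘ₗ (TensorProduct.mk K B A).flip 1) v ∘ₗ
    e.symm.toLinearMap ∘ₗ w

/-- The bracket `[v,w] = (μ_B ⊗ id_A)∘((id_B ⊗ v)∘w − (id_B ⊗ w)∘v)` on `ᴴDer(A, B ⊔ A)`. -/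
noncomputable def hderBracket {K : Type*} [Field K] {A B T : Type*}
    [Ring A] [Algebra K A] [Ring B] [Algebra K B] [Ring T] [Algebra K T]
    (e : B ⊗[K] A ≃ₗ[K] T) (v w : A →ₗ[K] T) : A →ₗ[K] T :=
  hderMul e v w - hderMul e w v

/-- The `B⁰`-action `(b·v)(a) = (b ⊗ 1_A) v(a)` on `ᴴDer(A, B ⊔ A)`. -/
noncomputable def hderSMul {K : Type*} [Field K] {A B T : Type*}
    [Ring A] [Algebra K A] [Ring B] [Algebra K B] [Ring T] [Algebra K T]
    (e : B ⊗[K] A ≃ₗ[K] T) (b : B) (v : A →ₗ[K] T) : A →ₗ[K] T :=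
  LinearMap.mulLeft K (e (b ⊗ₜ 1)) ∘ₗ v

/-- A braided derivation of homogeneous degree `d`:
`L(a a') = L(a) a' + R(deg a, d) a L(a')`. -/
def IsBraidedDer {n : ℕ} {K : Type*} [Field K] (R : (Fin n → ℤ) → (Fin n → ℤ) → Kˣ)
    {A : Type*} [Ring A] [Algebra K A] (𝒜 : (Fin n → ℤ) → Submodule K A)
    (d : Fin n → ℤ) (L : A →ₗ[K] A) : Prop :=
  (∀ p, ∀ a ∈ 𝒜 p, L a ∈ 𝒜 (p + d)) ∧
  ∀ p, ∀ a ∈ 𝒜 p, ∀ a' : A, L (a * a') = L a * a' + ((R p d : Kˣ) : K) • (a * L a')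


/-- the braided tensor product `A ⊔ B` with the canonical inclusions
`ι₁ : a ↦ a ⊗ 1`, `ι₂ : b ↦ 1 ⊗ b` is the coproduct in the category of
braided-commutative `ℤⁿ`-graded algebras. -/
theorem stmt4 {n : ℕ} {K : Type u} [Field K]
    (R : (Fin n → ℤ) → (Fin n → ℤ) → Kˣ) (hR : IsSkewBicharacter R)
    {A B : Type u} [Ring A] [Algebra K A] [Ring B] [Algebra K B]
    (𝒜 : (Fin n → ℤ) → Submodule K A) (ℬ : (Fin n → ℤ) → Submodule K B)
    [GradedAlgebra 𝒜] [GradedAlgebra ℬ]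
    (hA : BraidedComm R 𝒜) (hB : BraidedComm R ℬ)
    (mul : A ⊗[K] B →ₗ[K] A ⊗[K] B →ₗ[K] A ⊗[K] B)
    (hmul : ∀ p q p' q', ∀ a ∈ 𝒜 p, ∀ b ∈ ℬ q, ∀ a' ∈ 𝒜 p', ∀ b' ∈ ℬ q',
      mul (a ⊗ₜ b) (a' ⊗ₜ b') = ((R p' q : Kˣ) : K) • ((a * a') ⊗ₜ (b * b')))
    (C : Type u) [Ring C] [Algebra K C]
    (𝒞 : (Fin n → ℤ) → Submodule K C) [GradedAlgebra 𝒞] (hC : BraidedComm R 𝒞)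
    (φ : A →ₐ[K] C) (ψ : B →ₐ[K] C)
    (hφ : IsGradedMap 𝒜 𝒞 φ) (hψ : IsGradedMap ℬ 𝒞 ψ) :
    (∀ a a' : A, mul (a ⊗ₜ 1) (a' ⊗ₜ 1) = (a * a') ⊗ₜ 1) ∧
    (∀ b b' : B, mul (1 ⊗ₜ b) (1 ⊗ₜ b') = 1 ⊗ₜ (b * b')) ∧
    (∀ p, ∀ a ∈ 𝒜 p, (a ⊗ₜ (1 : B)) ∈ tensorGrade 𝒜 ℬ p) ∧
    (∀ p, ∀ b ∈ ℬ p, ((1 : A) ⊗ₜ b) ∈ tensorGrade 𝒜 ℬ p) ∧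
    (∃! χ : A ⊗[K] B →ₗ[K] C,
      χ (1 ⊗ₜ 1) = 1 ∧ (∀ x y, χ (mul x y) = χ x * χ y) ∧
      IsGradedMap (tensorGrade 𝒜 ℬ) 𝒞 χ ∧
      (∀ a : A, χ (a ⊗ₜ 1) = φ a) ∧ (∀ b : B, χ (1 ⊗ₜ b) = ψ b)) := by
  classical
  obtain ⟨⟨hR1, hR2⟩, hRskew⟩ := hR
  have hR0r : ∀ m, R m 0 = 1 := by
    intro m
    have h := hR2 m 0 0
    rw [add_zero] at h
    exact (mul_left_cancel (a := R m 0) (by rw [mul_one, ← h])).symm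
  have hR0l : ∀ m, R 0 m = 1 := by
    intro m
    have h := hR1 0 0 m
    rw [add_zero] at h
    exact (mul_left_cancel (a := R 0 m) (by rw [mul_one, ← h])).symm
  have oneA : (1 : A) ∈ 𝒜 0 := SetLike.one_mem_graded 𝒜
  have oneB : (1 : B) ∈ ℬ 0 := SetLike.one_mem_graded ℬ
  have memA : ∀ a : A, a ∈ ⨆ p, 𝒜 p := by
    intro a
    rw [← DirectSum.sum_support_decompose 𝒜 a]
    exact Submodule.sum_mem _ fun i _ => Submodule.mem_iSup_of_mem i (SetLike.coe_mem _)
  have memB : ∀ b : B, b ∈ ⨆ p, ℬ p := by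
    intro b
    rw [← DirectSum.sum_support_decompose ℬ b]
    exact Submodule.sum_mem _ fun i _ => Submodule.mem_iSup_of_mem i (SetLike.coe_mem _)
  have key1 : ∀ a a' : A, mul (a ⊗ₜ[K] (1:B)) (a' ⊗ₜ[K] (1:B)) = (a * a') ⊗ₜ[K] (1:B) := by
    intro a a'
    refine Submodule.iSup_induction 𝒜
      (motive := fun a => ∀ a', mul (a ⊗ₜ[K] (1:B)) (a' ⊗ₜ[K] (1:B)) = (a * a') ⊗ₜ[K] (1:B))
      (memA a) ?_ ?_ ?_ a'
    · intro p a ha a'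
      refine Submodule.iSup_induction 𝒜
        (motive := fun a' => mul (a ⊗ₜ[K] (1:B)) (a' ⊗ₜ[K] (1:B)) = (a * a') ⊗ₜ[K] (1:B))
        (memA a') ?_ ?_ ?_
      · intro p' a' ha'
        rw [hmul p 0 p' 0 a ha 1 oneB a' ha' 1 oneB]
        simp [hR0r]
      · simp
      · intro x y hx hy
        simp only [TensorProduct.add_tmul, map_add, hx, hy, mul_add]
    · intro a'; simp
    · intro x y hx hy a'
      simp only [TensorProduct.add_tmul, map_add, LinearMap.add_apply, hx, hy, add_mul]
  have key2 : ∀ b b' : B, mul ((1:A) ⊗ₜ[K] b) ((1:A) ⊗ₜ[K] b') = (1:A) ⊗ₜ[K] (b * b') := by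
    intro b b'
    refine Submodule.iSup_induction ℬ
      (motive := fun b => ∀ b', mul ((1:A) ⊗ₜ[K] b) ((1:A) ⊗ₜ[K] b') = (1:A) ⊗ₜ[K] (b * b'))
      (memB b) ?_ ?_ ?_ b'
    · intro q b hb b'
      refine Submodule.iSup_induction ℬ
        (motive := fun b' => mul ((1:A) ⊗ₜ[K] b) ((1:A) ⊗ₜ[K] b') = (1:A) ⊗ₜ[K] (b * b'))
        (memB b') ?_ ?_ ?_
      · intro q' b' hb'
        rw [hmul 0 q 0 q' 1 oneA b hb 1 oneA b' hb']
        simp [hR0l]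
      · simp
      · intro x y hx hy
        simp only [TensorProduct.tmul_add, map_add, hx, hy, mul_add]
    · intro b'; simp
    · intro x y hx hy b'
      simp only [TensorProduct.tmul_add, map_add, LinearMap.add_apply, hx, hy, add_mul]
  have incl1 : ∀ p, ∀ a ∈ 𝒜 p, (a ⊗ₜ[K] (1:B)) ∈ tensorGrade 𝒜 ℬ p := by
    intro p a ha
    refine Submodule.mem_iSup_of_mem p ⟨⟨a, ha⟩ ⊗ₜ[K] ⟨1, ?_⟩, by simp⟩
    rw [sub_self]; exact oneB
  have incl2 : ∀ p, ∀ b ∈ ℬ p, ((1:A) ⊗ₜ[K] b) ∈ tensorGrade 𝒜 ℬ p := by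
    intro p b hb
    refine Submodule.mem_iSup_of_mem 0 ⟨⟨1, oneA⟩ ⊗ₜ[K] ⟨b, ?_⟩, by simp⟩
    rw [sub_zero]; exact hb
  -- the candidate morphism
  set bil : A →ₗ[K] B →ₗ[K] C := (LinearMap.mul K C).compl₁₂ φ.toLinearMap ψ.toLinearMap with hbil
  set χ₀ : A ⊗[K] B →ₗ[K] C := TensorProduct.lift bil with hχ₀
  have hχ : ∀ (a : A) (b : B), χ₀ (a ⊗ₜ[K] b) = φ a * ψ b := fun a b => rfl
  -- spanning by homogeneous pure tensors
  set S : Set (A ⊗[K] B) := {x | ∃ p q, ∃ a ∈ 𝒜 p, ∃ b ∈ ℬ q, x = a ⊗ₜ[K] b} with hSdef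
  have hspan : ∀ x : A ⊗[K] B, x ∈ Submodule.span K S := by
    intro x
    refine TensorProduct.induction_on x (zero_mem _) ?_ (fun u v hu hv => add_mem hu hv)
    intro a b
    rw [← DirectSum.sum_support_decompose 𝒜 a, ← DirectSum.sum_support_decompose ℬ b,
      TensorProduct.sum_tmul]
    refine Submodule.sum_mem _ fun i _ => ?_
    rw [TensorProduct.tmul_sum]
    refine Submodule.sum_mem _ fun j _ => ?_
    exact Submodule.subset_span ⟨i, j, _, SetLike.coe_mem _, _, SetLike.coe_mem _, rfl⟩
  -- multiplicativity on homogeneous pure tensors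
  have hbase : ∀ x ∈ S, ∀ y ∈ S, χ₀ (mul x y) = χ₀ x * χ₀ y := by
    rintro _ ⟨p, q, a, ha, b, hb, rfl⟩ _ ⟨p', q', a', ha', b', hb', rfl⟩
    rw [hmul p q p' q' a ha b hb a' ha' b' hb', map_smul, hχ, hχ, hχ, map_mul, map_mul]
    have hcomm := hC q p' (ψ b) (hψ q b hb) (φ a') (hφ p' a' ha')
    rw [mul_assoc (φ a) (ψ b), ← mul_assoc (ψ b), hcomm, smul_mul_assoc, mul_smul_comm]
    simp [mul_assoc]
  -- full multiplicativity
  have hmulx : ∀ x ∈ S, ∀ y, χ₀ (mul x y) = χ₀ x * χ₀ y := by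
    intro x hx y
    refine Submodule.span_induction (p := fun y _ => χ₀ (mul x y) = χ₀ x * χ₀ y)
      (fun y hy => hbase x hx y hy) (by simp) ?_ ?_ (hspan y)
    · intro u v _ _ hu hv
      simp only [map_add, hu, hv, mul_add]
    · intro r u _ hu
      simp only [map_smul, hu, mul_smul_comm]
  have hmulχ : ∀ x y, χ₀ (mul x y) = χ₀ x * χ₀ y := by
    intro x y
    refine Submodule.span_induction (p := fun x _ => ∀ y, χ₀ (mul x y) = χ₀ x * χ₀ y)
      (fun x hx => hmulx x hx) (by simp) ?_ ?_ (hspan x) y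
    · intro u v _ _ hu hv y
      simp only [map_add, LinearMap.add_apply, hu, hv, add_mul]
    · intro r u _ hu y
      simp only [map_smul, LinearMap.smul_apply, hu, smul_mul_assoc]
  -- gradedness
  have hgrad : IsGradedMap (tensorGrade 𝒜 ℬ) 𝒞 χ₀ := by
    intro p x hx
    refine Submodule.iSup_induction _ (motive := fun x => χ₀ x ∈ 𝒞 p) hx ?_
      (by show χ₀ 0 ∈ 𝒞 p; rw [map_zero]; exact zero_mem _)
      (fun u v hu hv => by show χ₀ (u + v) ∈ 𝒞 p; rw [map_add]; exact add_mem hu hv)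
    intro q x hxq
    obtain ⟨t, rfl⟩ := hxq
    refine TensorProduct.induction_on t ?_ ?_ ?_
    · rw [map_zero, map_zero]; exact zero_mem _
    · intro u v
      rw [TensorProduct.map_tmul, hχ]
      have h1 := SetLike.mul_mem_graded (hφ q _ u.2) (hψ (p - q) _ v.2)
      have h2 : q + (p - q) = p := by abel
      rwa [h2] at h1
    · intro u v hu hv
      rw [map_add, map_add]; exact add_mem hu hv
  -- mul (a ⊗ 1) (1 ⊗ b) = a ⊗ b
  have hmix : ∀ (a : A) (b : B), mul (a ⊗ₜ[K] (1:B)) ((1:A) ⊗ₜ[K] b) = a ⊗ₜ[K] b := by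
    intro a b
    refine Submodule.iSup_induction 𝒜
      (motive := fun a => ∀ b, mul (a ⊗ₜ[K] (1:B)) ((1:A) ⊗ₜ[K] b) = a ⊗ₜ[K] b)
      (memA a) ?_ ?_ ?_ b
    · intro p a ha b
      refine Submodule.iSup_induction ℬ
        (motive := fun b => mul (a ⊗ₜ[K] (1:B)) ((1:A) ⊗ₜ[K] b) = a ⊗ₜ[K] b)
        (memB b) ?_ ?_ ?_
      · intro q b hb
        rw [hmul p 0 0 q a ha 1 oneB 1 oneA b hb]
        simp [hR0l]
      · simp
      · intro u v hu hv
        simp only [TensorProduct.tmul_add, map_add, hu, hv]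
    · intro b; simp
    · intro u v hu hv b
      simp only [TensorProduct.add_tmul, map_add, LinearMap.add_apply, hu, hv]
  refine ⟨key1, key2, incl1, incl2, χ₀, ⟨by simp [hχ], hmulχ, hgrad,
    fun a => by rw [hχ]; simp, fun b => by rw [hχ]; simp⟩, ?_⟩
  rintro χ' ⟨h1, h2, h3, h4, h5⟩
  refine TensorProduct.ext' fun a b => ?_
  have : χ' (a ⊗ₜ[K] b) = φ a * ψ b := by
    rw [← hmix a b, h2, h4, h5]
  rw [this, hχ]
end
end

section
/- Let B be a braided-commutative ℤⁿ-graded K-algebra and κ : C → B a graded algebra morphism, and let s ∈ C be homogeneous of degree 0. Then there is an isomorphism of graded algebras B ⊔_C C[s⁻¹] ≅ B[κ(s)⁻¹], where the pushout is taken along κ and the localization map ℓ_s : C → C[s⁻¹]. -/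
open scoped TensorProduct
open TensorProduct

noncomputable section

universe u v w

section Aux

variable {n : ℕ} {K : Type u} [Field K]

lemma tensorGrade_induction {A B : Type*}
    [AddCommGroup A] [Module K A] [AddCommGroup B] [Module K B]
    (𝒜 : (Fin n → ℤ) → Submodule K A) (ℬ : (Fin n → ℤ) → Submodule K B)
    (p : Fin n → ℤ) {M : A ⊗[K] B → Prop}
    (hz : M 0) (hadd : ∀ x y, M x → M y → M (x + y))
    (htmul : ∀ q, ∀ a ∈ 𝒜 q, ∀ b ∈ ℬ (p - q), M (a ⊗ₜ b)) :
    ∀ x ∈ tensorGrade 𝒜 ℬ p, M x := by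
  intro x hx
  refine Submodule.iSup_induction
    (fun q => LinearMap.range (TensorProduct.map (𝒜 q).subtype (ℬ (p - q)).subtype))
    (motive := M) hx ?_ hz hadd
  rintro q x ⟨z, rfl⟩
  induction z with
  | zero => simpa using hz
  | tmul a b =>
      simp only [TensorProduct.map_tmul, Submodule.subtype_apply]
      exact htmul q a a.2 b b.2
  | add u v hu hv => rw [map_add]; exact hadd _ _ hu hv

lemma tmul_mem_tensorGrade {A B : Type*}
    [AddCommGroup A] [Module K A] [AddCommGroup B] [Module K B]
    {𝒜 : (Fin n → ℤ) → Submodule K A} {ℬ : (Fin n → ℤ) → Submodule K B}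
    {p q : Fin n → ℤ} {a : A} {b : B} (ha : a ∈ 𝒜 q) (hb : b ∈ ℬ (p - q)) :
    a ⊗ₜ b ∈ tensorGrade 𝒜 ℬ p := by
  refine Submodule.mem_iSup_of_mem q ⟨(⟨a, ha⟩ : 𝒜 q) ⊗ₜ (⟨b, hb⟩ : ℬ (p - q)), ?_⟩
  simp

lemma bichar_zero_left (R : (Fin n → ℤ) → (Fin n → ℤ) → Kˣ) (hR : IsBicharacter R)
    (p : Fin n → ℤ) : R 0 p = 1 := by
  have := hR.1 0 0 p
  rw [add_zero] at this
  exact (mul_eq_left.mp this.symm)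

lemma central_of_deg_zero (R : (Fin n → ℤ) → (Fin n → ℤ) → Kˣ) (hR : IsBicharacter R)
    {D : Type*} [Ring D] [Algebra K D] (𝒟 : (Fin n → ℤ) → Submodule K D)
    [GradedAlgebra 𝒟] (hD : BraidedComm R 𝒟) {t : D} (ht : t ∈ 𝒟 0) :
    ∀ x : D, Commute x t := by
  have hhom : ∀ p, ∀ x ∈ 𝒟 p, x * t = t * x := by
    intro p x hx
    rw [hD p 0 x hx t ht, bichar_zero_left R hR p]
    simp
  intro x
  classical
  have := DirectSum.sum_support_decompose 𝒟 x
  rw [Commute, SemiconjBy, ← this, Finset.sum_mul, Finset.mul_sum]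
  exact Finset.sum_congr rfl fun i _ => hhom i _ (SetLike.coe_mem _)

/-- `aeval t` of any polynomial lies in degree `0` when `t` has degree `0`. -/
lemma aeval_mem_deg_zero {D : Type*} [Ring D] [Algebra K D]
    (𝒟 : (Fin n → ℤ) → Submodule K D) [GradedAlgebra 𝒟] {t : D} (ht : t ∈ 𝒟 0)
    (f : Polynomial K) : Polynomial.aeval t f ∈ 𝒟 (0 : Fin n → ℤ) := by
  induction f using Polynomial.induction_on with
  | C a =>
      simpa [Algebra.algebraMap_eq_smul_one] using
        Submodule.smul_mem _ a (SetLike.one_mem_graded 𝒟)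
  | add f g hf hg => rw [map_add]; exact Submodule.add_mem _ hf hg
  | monomial k a _ =>
      have : t ^ (k + 1) ∈ 𝒟 (0 : Fin n → ℤ) := by
        simpa using SetLike.pow_mem_graded (k + 1) ht
      rw [map_mul, Polynomial.aeval_C, map_pow, Polynomial.aeval_X, ← Algebra.smul_def]
      exact Submodule.smul_mem _ a this
      
/-- The canonical map `θ : C[s⁻¹] → B[κ(s)⁻¹]`. -/
noncomputable def thetaAux {B C : Type u} [Ring B] [Algebra K B] [Ring C] [Algebra K C]
    (κ : C →ₐ[K] B) (s : C) : Loc K C s →ₐ[K] Loc K B (κ s) :=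
  RingQuot.liftAlgHom K ⟨(RingQuot.mkAlgHom K (locRel K (κ s))).comp
      (Algebra.TensorProduct.map κ (AlgHom.id K (Polynomial K))), by
    rintro u v ⟨rfl, rfl⟩
    have : RingQuot.mkAlgHom K (locRel K (κ s)) ((κ s) ⊗ₜ[K] Polynomial.X) =
        RingQuot.mkAlgHom K (locRel K (κ s)) 1 :=
      RingQuot.mkAlgHom_rel K ⟨rfl, rfl⟩
    simpa using this⟩

lemma thetaAux_mk {B C : Type u} [Ring B] [Algebra K B] [Ring C] [Algebra K C]
    (κ : C →ₐ[K] B) (s : C) (u : C ⊗[K] Polynomial K) :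
    thetaAux κ s (RingQuot.mkAlgHom K (locRel K s) u) =
      RingQuot.mkAlgHom K (locRel K (κ s))
        (Algebra.TensorProduct.map κ (AlgHom.id K (Polynomial K)) u) := by
  simp [thetaAux]

end Aux

lemma commute_aeval {K : Type u} [Field K] {D : Type*} [Ring D] [Algebra K D]
    {y t : D} (h : Commute y t) (f : Polynomial K) :
    Commute y (Polynomial.aeval t f) := by
  induction f using Polynomial.induction_on with
  | C a => simpa using (show Commute y (algebraMap K D a) from (Algebra.commutes a y).symm)
  | add f g hf hg => rw [map_add]; exact hf.add_right hg
  | monomial k a hk =>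
      rw [map_mul, map_pow, Polynomial.aeval_C, Polynomial.aeval_X]
      exact Commute.mul_right (by simpa using (show Commute y (algebraMap K D a) from (Algebra.commutes a y).symm))
        (h.pow_right (k + 1))

/-- `B ⊔_C C[s⁻¹] ≅ B[κ(s)⁻¹]`, expressed by saying that `B[κ(s)⁻¹]` together
with `ℓ_{κ(s)}` and the canonical map `θ : C[s⁻¹] → B[κ(s)⁻¹]` is the pushout of
`B ← C → C[s⁻¹]` in the category of braided-commutative `ℤⁿ`-graded algebras. -/
theorem stmt7 {n : ℕ} {K : Type u} [Field K]
    (R : (Fin n → ℤ) → (Fin n → ℤ) → Kˣ) (hR : IsSkewBicharacter R)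
    {B C : Type u} [Ring B] [Algebra K B] [Ring C] [Algebra K C]
    (ℬ : (Fin n → ℤ) → Submodule K B) (𝒞 : (Fin n → ℤ) → Submodule K C)
    [GradedAlgebra ℬ] [GradedAlgebra 𝒞]
    (hB : BraidedComm R ℬ) (hC : BraidedComm R 𝒞)
    (κ : C →ₐ[K] B) (hκ : IsGradedMap 𝒞 ℬ κ)
    (s : C) (hs : s ∈ 𝒞 0) :
    ∃ θ : Loc K C s →ₐ[K] Loc K B (κ s),
      θ.comp (locHom K s) = (locHom K (κ s)).comp κ ∧
      θ (locInv K s) = locInv K (κ s) ∧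
      IsGradedMap (locGrade K 𝒞 s) (locGrade K ℬ (κ s)) θ ∧
      (∀ (D : Type w) [Ring D] [Algebra K D]
        (𝒟 : (Fin n → ℤ) → Submodule K D) [GradedAlgebra 𝒟],
        BraidedComm R 𝒟 →
        ∀ (φ : B →ₐ[K] D) (ψ : Loc K C s →ₐ[K] D),
          IsGradedMap ℬ 𝒟 φ → IsGradedMap (locGrade K 𝒞 s) 𝒟 ψ →
          ψ.comp (locHom K s) = φ.comp κ →
          ∃! χ : Loc K B (κ s) →ₐ[K] D,
            IsGradedMap (locGrade K ℬ (κ s)) 𝒟 χ ∧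
            χ.comp (locHom K (κ s)) = φ ∧ χ.comp θ = ψ) := by
  classical
  set mkC := RingQuot.mkAlgHom K (locRel K s) with hmkC
  set mkB := RingQuot.mkAlgHom K (locRel K (κ s)) with hmkB
  have hθlocHom : (thetaAux κ s).comp (locHom K s) = (locHom K (κ s)).comp κ := by
    apply AlgHom.ext; intro c
    simp [locHom, thetaAux_mk]
  have hθinv : thetaAux κ s (locInv K s) = locInv K (κ s) := by
    simp [locInv, thetaAux_mk]
  have hθgrad : IsGradedMap (locGrade K 𝒞 s) (locGrade K ℬ (κ s)) (thetaAux κ s) := by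
    intro p a ha
    obtain ⟨u, hu, rfl⟩ := ha
    have key : Algebra.TensorProduct.map κ (AlgHom.id K (Polynomial K)) u ∈
        tensorGrade ℬ (unitGrade K) p := by
      refine tensorGrade_induction (M := fun u =>
          Algebra.TensorProduct.map κ (AlgHom.id K (Polynomial K)) u ∈
            tensorGrade ℬ (unitGrade K) p) 𝒞 (unitGrade K) p ?_ ?_ ?_ u hu
      · simp
      · intro x y hx hy; rw [map_add]; exact Submodule.add_mem _ hx hy
      · intro q c hc f hf
        rw [Algebra.TensorProduct.map_tmul]
        exact tmul_mem_tensorGrade (hκ q c hc) hf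
    exact ⟨_, key, (thetaAux_mk κ s u).symm⟩
  refine ⟨thetaAux κ s, hθlocHom, hθinv, hθgrad, ?_⟩
  intro D _ _ 𝒟 _ hD φ ψ hφ hψ hcomm
  set t := ψ (locInv K s) with ht_def
  have hlocinv_mem : locInv K s ∈ locGrade K 𝒞 s 0 := by
    refine ⟨(1 : C) ⊗ₜ Polynomial.X, ?_, rfl⟩
    refine tmul_mem_tensorGrade (q := 0) (SetLike.one_mem_graded 𝒞) ?_
    simp [unitGrade]
  have htmem : t ∈ 𝒟 0 := hψ 0 _ hlocinv_mem
  have hcentral : ∀ x : D, Commute x t := central_of_deg_zero R hR.1 𝒟 hD htmem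
  have hmul_one : locHom K s s * locInv K s = (1 : Loc K C s) := by
    rw [locHom, locInv]
    simp only [AlgHom.comp_apply, Algebra.TensorProduct.includeLeft_apply]
    rw [← map_mul, Algebra.TensorProduct.tmul_mul_tmul, mul_one, one_mul]
    have : mkC (s ⊗ₜ[K] Polynomial.X) = mkC 1 := RingQuot.mkAlgHom_rel K ⟨rfl, rfl⟩
    rw [hmkC] at this
    rw [this, map_one]
  have hst : φ (κ s) * t = 1 := by
    have h1 : φ (κ s) = ψ (locHom K s s) := (AlgHom.congr_fun hcomm s).symm
    rw [h1, ht_def, ← map_mul, hmul_one, map_one]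
  have hcommute : ∀ (b : B) (x : Polynomial K), Commute (φ b) (Polynomial.aeval t x) :=
    fun b x => commute_aeval (hcentral (φ b)) x
  set f : B ⊗[K] Polynomial K →ₐ[K] D :=
    Algebra.TensorProduct.lift φ (Polynomial.aeval t) hcommute with hf
  have hftmul : ∀ (b : B) (g : Polynomial K), f (b ⊗ₜ g) = φ b * Polynomial.aeval t g :=
    fun b g => Algebra.TensorProduct.lift_tmul φ (Polynomial.aeval t) hcommute b g
  have hrel : ∀ ⦃x y⦄, locRel K (κ s) x y → f x = f y := by
    rintro x y ⟨rfl, rfl⟩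
    rw [map_one, hftmul, Polynomial.aeval_X]
    exact hst
  set χ : Loc K B (κ s) →ₐ[K] D := RingQuot.liftAlgHom K ⟨f, hrel⟩ with hχ
  have hχmk : ∀ u, χ (mkB u) = f u := fun u =>
    RingQuot.liftAlgHom_mkAlgHom_apply K f hrel u
  have hχgrad : IsGradedMap (locGrade K ℬ (κ s)) 𝒟 χ := by
    intro p a ha
    obtain ⟨u, hu, rfl⟩ := ha
    have key : ∀ u ∈ tensorGrade ℬ (unitGrade K) p, f u ∈ 𝒟 p := by
      refine tensorGrade_induction (M := fun u => f u ∈ 𝒟 p) ℬ (unitGrade K) p ?_ ?_ ?_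
      · simp
      · intro x y hx hy; rw [map_add]; exact Submodule.add_mem _ hx hy
      · intro q b hb g hg
        by_cases hq : p - q = 0
        · obtain rfl : p = q := sub_eq_zero.mp hq
          rw [hftmul]
          simpa using SetLike.mul_mem_graded (hφ p b hb) (aeval_mem_deg_zero 𝒟 htmem g)
        · rw [unitGrade, if_neg hq] at hg
          obtain rfl : g = 0 := hg
          simp
    rw [AlgHom.toLinearMap_apply, hχmk]
    exact key u hu
  have hχloc : χ.comp (locHom K (κ s)) = φ := by
    apply AlgHom.ext; intro b
    simp only [AlgHom.comp_apply, locHom, Algebra.TensorProduct.includeLeft_apply]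
    rw [← hmkB, hχmk, hftmul]
    simp
  have hχθ : χ.comp (thetaAux κ s) = ψ := by
    apply RingQuot.ringQuot_ext'
    apply Algebra.TensorProduct.ext
    · apply AlgHom.ext; intro c
      have h1 : ψ (mkC (c ⊗ₜ 1)) = φ (κ c) := AlgHom.congr_fun hcomm c
      simp only [AlgHom.comp_apply, Algebra.TensorProduct.includeLeft_apply]
      rw [← hmkC, thetaAux_mk, Algebra.TensorProduct.map_tmul, map_one, ← hmkB,
        hχmk, hftmul, map_one, mul_one, h1]
    · apply Polynomial.algHom_ext
      simp only [AlgHom.comp_apply, AlgHom.coe_restrictScalars',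
        Algebra.TensorProduct.includeRight_apply]
      rw [← hmkC, thetaAux_mk, Algebra.TensorProduct.map_tmul, map_one, ← hmkB,
        hχmk, hftmul, AlgHom.id_apply, Polynomial.aeval_X, map_one, one_mul]
      rfl
  refine ⟨χ, ⟨hχgrad, hχloc, hχθ⟩, ?_⟩
  rintro χ' ⟨-, hl', hθ'⟩
  apply RingQuot.ringQuot_ext'
  apply Algebra.TensorProduct.ext
  · apply AlgHom.ext; intro b
    have h1 : χ' (locHom K (κ s) b) = φ b := AlgHom.congr_fun hl' b
    have h2 : χ (locHom K (κ s) b) = φ b := AlgHom.congr_fun hχloc b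
    simp only [AlgHom.comp_apply, Algebra.TensorProduct.includeLeft_apply]
    rw [← hmkB]
    exact h1.trans h2.symm
  · apply Polynomial.algHom_ext
    have h1 : χ' (locInv K (κ s)) = t := by
      rw [← hθinv, ← AlgHom.comp_apply, hθ', ht_def]
    have h2 : χ (locInv K (κ s)) = t := by
      rw [← hθinv, ← AlgHom.comp_apply, hχθ, ht_def]
    simp only [AlgHom.comp_apply, AlgHom.coe_restrictScalars',
      Algebra.TensorProduct.includeRight_apply]
    rw [← hmkB]
    have : mkB ((1 : B) ⊗ₜ Polynomial.X) = locInv K (κ s) := rfl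
    rw [this, h1, h2]
end
end

section
/- Let A, B be braided-commutative ℤⁿ-graded K-algebras. Define ᴴDer(A, B ⊔ A) to be the set of degree-preserving K-linear maps v : A → B ⊔ A satisfying v(a a') = v(a)(1_B ⊗ a') + (1_B ⊗ a)v(a') for all a, a' ∈ A. Then ᴴDer(A, B ⊔ A) is a module over the commutative ring B⁰ of degree-0 elements of B, with action (b·v)(a) := (b ⊗ 1_A)·v(a), and the bracket [v, w] := (μ_B ⊗ id_A) ∘ ((id_B ⊗ v) ∘ w − (id_B ⊗ w) ∘ v) is a well-defined B⁰-bilinear Lie bracket on ᴴDer(A, B ⊔ A): [v,w] again satisfies the Leibniz rule and degree-preservation, [v,w] = −[w,v], the Jacobi identity holds, and [b·v, w] = b·[v,w] = [v, b·w] for all b ∈ B⁰. -/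
open scoped TensorProduct
open TensorProduct

noncomputable section

universe u v w

section Aux

variable {n : ℕ} {K : Type*} [Field K]
    {R : (Fin n → ℤ) → (Fin n → ℤ) → Kˣ}
    {A B T : Type*} [Ring A] [Algebra K A] [Ring B] [Algebra K B] [Ring T] [Algebra K T]
    {𝒜 : (Fin n → ℤ) → Submodule K A} {ℬ : (Fin n → ℤ) → Submodule K B}
    {𝒯 : (Fin n → ℤ) → Submodule K T}

lemma R_right_zero (hR : IsSkewBicharacter R) (m : Fin n → ℤ) : R m 0 = 1 := by
  have h := hR.1.2 m 0 0
  rw [add_zero] at h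
  exact (mul_left_cancel (show R m 0 * 1 = R m 0 * R m 0 by rw [mul_one]; exact h)).symm

lemma R_left_zero (hR : IsSkewBicharacter R) (m : Fin n → ℤ) : R 0 m = 1 := by
  have h := hR.1.1 0 0 m
  rw [add_zero] at h
  exact (mul_left_cancel (show R 0 m * 1 = R 0 m * R 0 m by rw [mul_one]; exact h)).symm

lemma tmul_mem (bt : BraidedTensor R ℬ 𝒜 𝒯) {p q : Fin n → ℤ} {b : B} {a : A}
    (hb : b ∈ ℬ p) (ha : a ∈ 𝒜 q) : bt.e (b ⊗ₜ a) ∈ 𝒯 (p + q) := by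
  rw [← bt.grade_def]
  refine Submodule.mem_map.2 ⟨b ⊗ₜ a, ?_, rfl⟩
  refine le_iSup
    (fun q' => LinearMap.range (TensorProduct.map (ℬ q').subtype (𝒜 (p + q - q')).subtype)) p ?_
  exact ⟨⟨b, hb⟩ ⊗ₜ ⟨a, by simpa [add_sub_cancel_left] using ha⟩, rfl⟩

lemma grade_ind (bt : BraidedTensor R ℬ 𝒜 𝒯) {p : Fin n → ℤ} {t : T} (ht : t ∈ 𝒯 p)
    {P : T → Prop} (hz : P 0) (hadd : ∀ x y, P x → P y → P (x + y))
    (hsmul : ∀ (c : K) x, P x → P (c • x))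
    (hgen : ∀ q, ∀ b ∈ ℬ q, ∀ a ∈ 𝒜 (p - q), P (bt.e (b ⊗ₜ a))) : P t := by
  let S : Submodule K T :=
    { carrier := setOf P
      add_mem' := fun hx hy => hadd _ _ hx hy
      zero_mem' := hz
      smul_mem' := fun c x hx => hsmul c x hx }
  suffices h : 𝒯 p ≤ S from h ht
  rw [← bt.grade_def, Submodule.map_le_iff_le_comap]
  simp only [tensorGrade]
  refine iSup_le fun q => ?_
  rintro x ⟨y, rfl⟩
  induction y using TensorProduct.induction_on with
  | zero => simpa using hz
  | tmul b a =>
      have := hgen q b.1 b.2 a.1 a.2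
      show P _
      simpa using this
  | add x y hx hy =>
      show P _
      simp only [map_add]
      exact hadd _ _ hx hy


variable [GradedAlgebra 𝒜] [GradedAlgebra ℬ]

lemma homB (P : B → Prop) (hz : P 0)
    (hadd : ∀ x y, P x → P y → P (x + y)) (hgen : ∀ q, ∀ b ∈ ℬ q, P b) (b : B) : P b :=
  DirectSum.Decomposition.inductionOn ℬ hz (fun {i} m => hgen i m.1 m.2) hadd b

lemma homA (P : A → Prop) (hz : P 0)
    (hadd : ∀ x y, P x → P y → P (x + y)) (hgen : ∀ q, ∀ a ∈ 𝒜 q, P a) (a : A) : P a :=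
  DirectSum.Decomposition.inductionOn 𝒜 hz (fun {i} m => hgen i m.1 m.2) hadd a

/-- `e(b⊗1) * e(b'⊗a') = e((b*b')⊗a')` for all `b b' a'`. -/
lemma mulBt (hR : IsSkewBicharacter R) (bt : BraidedTensor R ℬ 𝒜 𝒯) (b b' : B) (a' : A) :
    bt.e (b ⊗ₜ 1) * bt.e (b' ⊗ₜ a') = bt.e ((b * b') ⊗ₜ a') := by
  refine homB (ℬ := ℬ) (P := fun b => ∀ b' a', bt.e (b ⊗ₜ 1) * bt.e (b' ⊗ₜ a') = bt.e ((b * b') ⊗ₜ a'))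
    ?_ ?_ ?_ b b' a'
  · intro b' a'; simp [TensorProduct.zero_tmul]
  · intro x y hx hy b' a'
    simp only [TensorProduct.add_tmul, map_add, add_mul, hx, hy]
  · intro qb b hb
    intro b' a'
    refine homB (ℬ := ℬ) (P := fun b' => ∀ a', bt.e (b ⊗ₜ 1) * bt.e (b' ⊗ₜ a') = bt.e ((b * b') ⊗ₜ a'))
      ?_ ?_ ?_ b' a'
    · intro a'; simp [TensorProduct.zero_tmul]
    · intro x y hx hy a'
      simp only [TensorProduct.add_tmul, map_add, mul_add, add_mul, hx, hy]
    · intro qb' b' hb'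
      intro a'
      refine homA (𝒜 := 𝒜) (P := fun a' => bt.e (b ⊗ₜ 1) * bt.e (b' ⊗ₜ a') = bt.e ((b * b') ⊗ₜ a'))
        ?_ ?_ ?_ a'
      · simp [TensorProduct.tmul_zero]
      · intro x y hx hy
        simp only [TensorProduct.tmul_add, map_add, mul_add, hx, hy]
      · intro qa' a' ha'
        have := bt.mul_def qb 0 qb' qa' b hb 1 (SetLike.one_mem_graded 𝒜) b' hb' a' ha'
        rw [this, R_right_zero hR, one_mul]
        simp

/-- `e(b⊗a) * e(1⊗a') = e(b⊗(a*a'))` for all `b a a'`. -/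
lemma mulTA (hR : IsSkewBicharacter R) (bt : BraidedTensor R ℬ 𝒜 𝒯) (b : B) (a a' : A) :
    bt.e (b ⊗ₜ a) * bt.e (1 ⊗ₜ a') = bt.e (b ⊗ₜ (a * a')) := by
  refine homB (ℬ := ℬ) (P := fun b => ∀ a a', bt.e (b ⊗ₜ a) * bt.e (1 ⊗ₜ a') = bt.e (b ⊗ₜ (a * a')))
    ?_ ?_ ?_ b a a'
  · intro a a'; simp [TensorProduct.zero_tmul]
  · intro x y hx hy a a'
    simp only [TensorProduct.add_tmul, map_add, add_mul, hx, hy]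
  · intro qb b hb a a'
    refine homA (𝒜 := 𝒜) (P := fun a => ∀ a', bt.e (b ⊗ₜ a) * bt.e (1 ⊗ₜ a') = bt.e (b ⊗ₜ (a * a')))
      ?_ ?_ ?_ a a'
    · intro a'; simp [TensorProduct.tmul_zero]
    · intro x y hx hy a'
      simp only [TensorProduct.tmul_add, map_add, add_mul, mul_add, TensorProduct.add_tmul, hx, hy]
    · intro qa a ha a'
      refine homA (𝒜 := 𝒜) (P := fun a' => bt.e (b ⊗ₜ a) * bt.e (1 ⊗ₜ a') = bt.e (b ⊗ₜ (a * a')))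
        ?_ ?_ ?_ a'
      · simp [TensorProduct.tmul_zero]
      · intro x y hx hy
        simp only [TensorProduct.tmul_add, map_add, mul_add, hx, hy]
      · intro qa' a' ha'
        have := bt.mul_def qb qa 0 qa' b hb a ha 1 (SetLike.one_mem_graded ℬ) a' ha'
        rw [this, R_left_zero hR, mul_one]
        simp

/-- The braided commutativity of `T`. -/
lemma Tcomm (hR : IsSkewBicharacter R) (hA : BraidedComm R 𝒜) (hB : BraidedComm R ℬ)
    (bt : BraidedTensor R ℬ 𝒜 𝒯) {p q : Fin n → ℤ} {t s : T}
    (ht : t ∈ 𝒯 p) (hs : s ∈ 𝒯 q) :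
    t * s = ((R q p : Kˣ) : K) • (s * t) := by
  refine grade_ind bt ht (P := fun t => t * s = ((R q p : Kˣ) : K) • (s * t)) ?_ ?_ ?_ ?_
  · simp
  · intro x y hx hy; rw [add_mul, mul_add, hx, hy, smul_add]
  · intro c x hx; rw [smul_mul_assoc, hx, mul_smul_comm, smul_comm]
  · intro r b hb a ha
    refine grade_ind bt hs
      (P := fun s => bt.e (b ⊗ₜ a) * s = ((R q p : Kˣ) : K) • (s * bt.e (b ⊗ₜ a))) ?_ ?_ ?_ ?_
    · simp
    · intro x y hx hy; rw [mul_add, add_mul, hx, hy, smul_add]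
    · intro c x hx; rw [mul_smul_comm, hx, smul_mul_assoc, smul_comm]
    · intro r' b' hb' a' ha'
      rw [bt.mul_def r (p - r) r' (q - r') b hb a ha b' hb' a' ha',
          bt.mul_def r' (q - r') r (p - r) b' hb' a' ha' b hb a ha,
          hB r' r b' hb' b hb, hA (q - r') (p - r) a' ha' a ha]
      have h4 : ((((R r r' : Kˣ) : K)) • (b * b')) ⊗ₜ[K]
            ((((R (p - r) (q - r') : Kˣ) : K)) • (a * a')) =
          ((((R r r' : Kˣ) : K)) * (((R (p - r) (q - r') : Kˣ) : K))) •
            ((b * b') ⊗ₜ[K] (a * a')) := TensorProduct.smul_tmul_smul _ _ _ _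
      rw [h4, map_smul, smul_smul, smul_smul]
      congr 1
      have h1 := congrArg Units.val (hR.2 r' r)
      have h2 := congrArg Units.val (hR.2 (q - r') r)
      have h3 := congrArg Units.val (hR.2 (p - r) (q - r'))
      have e1 : ((R q p : Kˣ) : K) =
          ((R r' r : Kˣ) : K) * ((R r' (p - r) : Kˣ) : K) *
          (((R (q - r') r : Kˣ) : K) * ((R (q - r') (p - r) : Kˣ) : K)) := by
        have hq : q = r' + (q - r') := by abel
        have hp : p = r + (p - r) := by abel
        rw [hq, hp, ← hq, ← hp]
        nth_rewrite 1 [hq, hp]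
        rw [hR.1.1, hR.1.2, hR.1.2]
        push_cast
        ring
      simp only [Units.val_mul, Units.val_one] at h1 h2 h3
      rw [e1]
      linear_combination (-((R r' (p-r) : Kˣ) : K) * ((R (q-r') r : Kˣ) : K) *
          ((R r (q-r') : Kˣ) : K) * ((R (q-r') (p-r) : Kˣ) : K) *
          ((R (p-r) (q-r') : Kˣ) : K)) * h1 +
        (-((R r' (p-r) : Kˣ) : K) * ((R (q-r') (p-r) : Kˣ) : K) *
          ((R (p-r) (q-r') : Kˣ) : K)) * h2 +
        (-((R r' (p-r) : Kˣ) : K)) * h3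


/-- The extension `v̂ = μ ∘ (ι_B ⊗ v) ∘ e⁻¹ : T → T` of `v : A → T`. -/
noncomputable def phi (bt : BraidedTensor R ℬ 𝒜 𝒯) (v : A →ₗ[K] T) : T →ₗ[K] T :=
  LinearMap.mul' K T ∘ₗ
    TensorProduct.map (bt.e.toLinearMap ∘ₗ (TensorProduct.mk K B A).flip 1) v ∘ₗ
    bt.e.symm.toLinearMap

lemma phi_apply (bt : BraidedTensor R ℬ 𝒜 𝒯) (v : A →ₗ[K] T) (b : B) (a : A) :
    phi bt v (bt.e (b ⊗ₜ a)) = bt.e (b ⊗ₜ 1) * v a := by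
  simp [phi, LinearMap.mul'_apply]

lemma T_ind (bt : BraidedTensor R ℬ 𝒜 𝒯) {P : T → Prop} (hz : P 0)
    (hadd : ∀ x y, P x → P y → P (x + y))
    (hgen : ∀ b a, P (bt.e (b ⊗ₜ a))) (t : T) : P t := by
  have h : t = bt.e (bt.e.symm t) := (bt.e.apply_symm_apply t).symm
  rw [h]
  generalize bt.e.symm t = y
  induction y using TensorProduct.induction_on with
  | zero => simpa using hz
  | tmul b a => exact hgen b a
  | add x y hx hy => rw [map_add]; exact hadd _ _ hx hy

lemma mul_mem_T (bt : BraidedTensor R ℬ 𝒜 𝒯) {p q : Fin n → ℤ} {t s : T}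
    (ht : t ∈ 𝒯 p) (hs : s ∈ 𝒯 q) : t * s ∈ 𝒯 (p + q) := by
  refine grade_ind bt ht (P := fun t => t * s ∈ 𝒯 (p + q)) ?_ ?_ ?_ ?_
  · beta_reduce; rw [zero_mul]; exact Submodule.zero_mem _
  · intro x y hx hy; beta_reduce; rw [add_mul]; exact Submodule.add_mem _ hx hy
  · intro c x hx; beta_reduce; rw [smul_mul_assoc]; exact Submodule.smul_mem _ _ hx
  · intro r b hb a ha
    refine grade_ind bt hs (P := fun s => bt.e (b ⊗ₜ a) * s ∈ 𝒯 (p + q)) ?_ ?_ ?_ ?_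
    · beta_reduce; rw [mul_zero]; exact Submodule.zero_mem _
    · intro x y hx hy; beta_reduce; rw [mul_add]; exact Submodule.add_mem _ hx hy
    · intro c x hx; beta_reduce; rw [mul_smul_comm]; exact Submodule.smul_mem _ _ hx
    · intro r' b' hb' a' ha'
      beta_reduce
      rw [bt.mul_def r (p - r) r' (q - r') b hb a ha b' hb' a' ha']
      refine Submodule.smul_mem _ _ ?_
      have h1 := tmul_mem bt (SetLike.mul_mem_graded hb hb')
        (SetLike.mul_mem_graded ha ha')
      have hidx : (r + r') + ((p - r) + (q - r')) = p + q := by abel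
      rwa [hidx] at h1

lemma phi_mem (bt : BraidedTensor R ℬ 𝒜 𝒯) {v : A →ₗ[K] T}
    (hv : ∀ p, ∀ a ∈ 𝒜 p, v a ∈ 𝒯 p) {q : Fin n → ℤ} {t : T} (ht : t ∈ 𝒯 q) :
    phi bt v t ∈ 𝒯 q := by
  refine grade_ind bt ht (P := fun t => phi bt v t ∈ 𝒯 q) ?_ ?_ ?_ ?_
  · beta_reduce; rw [map_zero]; exact Submodule.zero_mem _
  · intro x y hx hy; beta_reduce; rw [map_add]; exact Submodule.add_mem _ hx hy
  · intro c x hx; beta_reduce; rw [map_smul]; exact Submodule.smul_mem _ _ hx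
  · intro r b hb a ha
    beta_reduce
    rw [phi_apply]
    have h1 : bt.e (b ⊗ₜ (1 : A)) ∈ 𝒯 (r + 0) :=
      tmul_mem bt hb (SetLike.one_mem_graded 𝒜)
    have h2 := mul_mem_T bt h1 (hv _ a ha)
    have hidx : (r + 0) + (q - r) = q := by abel
    rwa [hidx] at h2

lemma phi_mulLeft_e (hR : IsSkewBicharacter R) (bt : BraidedTensor R ℬ 𝒜 𝒯)
    (v : A →ₗ[K] T) (b : B) (t : T) :
    phi bt v (bt.e (b ⊗ₜ 1) * t) = bt.e (b ⊗ₜ 1) * phi bt v t := by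
  refine T_ind bt (P := fun t => phi bt v (bt.e (b ⊗ₜ 1) * t) = bt.e (b ⊗ₜ 1) * phi bt v t)
    ?_ ?_ ?_ t
  · simp
  · intro x y hx hy
    rw [mul_add, map_add, map_add, mul_add, hx, hy]
  · intro b' a'
    rw [mulBt hR bt b b' a', phi_apply, phi_apply, ← mulBt hR bt b b' 1, mul_assoc]

lemma phi_mul_iotaA (hR : IsSkewBicharacter R) (bt : BraidedTensor R ℬ 𝒜 𝒯)
    {v : A →ₗ[K] T}
    (hv : ∀ a a' : A, v (a * a') = v a * bt.e (1 ⊗ₜ a') + bt.e (1 ⊗ₜ a) * v a')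
    (t : T) (a' : A) :
    phi bt v (t * bt.e (1 ⊗ₜ a')) = phi bt v t * bt.e (1 ⊗ₜ a') + t * v a' := by
  refine T_ind bt (P := fun t =>
    phi bt v (t * bt.e (1 ⊗ₜ a')) = phi bt v t * bt.e (1 ⊗ₜ a') + t * v a') ?_ ?_ ?_ t
  · simp
  · intro x y hx hy
    rw [add_mul, map_add, map_add, add_mul, add_mul, hx, hy]
    abel
  · intro b a
    have hba : bt.e (b ⊗ₜ (1 : A)) * bt.e ((1 : B) ⊗ₜ a) = bt.e (b ⊗ₜ a) := by
      rw [mulBt hR bt b 1 a, mul_one]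
    rw [mulTA hR bt b a a', phi_apply, hv a a', mul_add, phi_apply, ← hba,
      ← mul_assoc, ← mul_assoc]

lemma comm_grade0 (hR : IsSkewBicharacter R) (hA : BraidedComm R 𝒜) (hB : BraidedComm R ℬ)
    (bt : BraidedTensor R ℬ 𝒜 𝒯) {β : T} (hβ : β ∈ 𝒯 (0 : Fin n → ℤ)) (t : T) :
    β * t = t * β := by
  refine T_ind bt (P := fun t => β * t = t * β) ?_ ?_ ?_ t
  · simp
  · intro x y hx hy; rw [mul_add, add_mul, hx, hy]
  · intro b a
    refine homB (ℬ := ℬ) (P := fun b => ∀ a, β * bt.e (b ⊗ₜ a) = bt.e (b ⊗ₜ a) * β)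
      ?_ ?_ ?_ b a
    · intro a; simp [TensorProduct.zero_tmul]
    · intro x y hx hy a
      simp only [TensorProduct.add_tmul, map_add, mul_add, add_mul, hx, hy]
    · intro q b hb a
      refine homA (𝒜 := 𝒜) (P := fun a => β * bt.e (b ⊗ₜ a) = bt.e (b ⊗ₜ a) * β)
        ?_ ?_ ?_ a
      · simp [TensorProduct.tmul_zero]
      · intro x y hx hy
        simp only [TensorProduct.tmul_add, map_add, mul_add, add_mul, hx, hy]
      · intro q' a ha
        have h1 : bt.e (b ⊗ₜ a) ∈ 𝒯 (q + q') := tmul_mem bt hb ha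
        have h2 := Tcomm hR hA hB bt hβ h1
        rw [h2, R_right_zero hR]
        simp

lemma phi_iotaA_mul (hR : IsSkewBicharacter R) (hA : BraidedComm R 𝒜)
    (hB : BraidedComm R ℬ) (bt : BraidedTensor R ℬ 𝒜 𝒯)
    {v : A →ₗ[K] T} (hv : IsHDer 𝒜 bt.e 𝒯 v) {qa qs : Fin n → ℤ} {a : A} {s : T}
    (ha : a ∈ 𝒜 qa) (hs : s ∈ 𝒯 qs) :
    phi bt v (bt.e (1 ⊗ₜ a) * s) = bt.e (1 ⊗ₜ a) * phi bt v s + v a * s := by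
  have hιa : bt.e ((1 : B) ⊗ₜ a) ∈ 𝒯 qa := by
    have := tmul_mem bt (SetLike.one_mem_graded ℬ) ha
    rwa [zero_add] at this
  have h1 := Tcomm hR hA hB bt hιa hs
  rw [h1, map_smul, phi_mul_iotaA hR bt hv.2 s a]
  have h2 : phi bt v s * bt.e ((1 : B) ⊗ₜ a) =
      ((R qa qs : Kˣ) : K) • (bt.e ((1 : B) ⊗ₜ a) * phi bt v s) :=
    Tcomm hR hA hB bt (phi_mem bt hv.1 hs) hιa
  have h3 : s * v a = ((R qa qs : Kˣ) : K) • (v a * s) :=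
    Tcomm hR hA hB bt hs (hv.1 qa a ha)
  rw [smul_add, h2, h3, smul_smul, smul_smul]
  have hu : ((R qs qa : Kˣ) : K) * ((R qa qs : Kˣ) : K) = 1 := by
    have := congrArg Units.val (hR.2 qs qa)
    simpa using this
  rw [hu, one_smul, one_smul]

lemma phi_comp (hR : IsSkewBicharacter R) (bt : BraidedTensor R ℬ 𝒜 𝒯)
    (v w : A →ₗ[K] T) :
    phi bt (phi bt v ∘ₗ w) = phi bt v ∘ₗ phi bt w := by
  apply LinearMap.ext; intro t
  refine T_ind bt
    (P := fun t => phi bt (phi bt v ∘ₗ w) t = (phi bt v ∘ₗ phi bt w) t) ?_ ?_ ?_ t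
  · simp
  · intro x y hx hy; simp only [map_add]; rw [hx, hy]
  · intro b a
    simp only [LinearMap.comp_apply]
    rw [phi_apply, phi_apply, phi_mulLeft_e hR bt v b (w a)]
    simp only [LinearMap.comp_apply]

lemma phi_sub (bt : BraidedTensor R ℬ 𝒜 𝒯) (x y : A →ₗ[K] T) :
    phi bt (x - y) = phi bt x - phi bt y := by
  apply LinearMap.ext; intro t
  refine T_ind bt (P := fun t => phi bt (x - y) t = (phi bt x - phi bt y) t) ?_ ?_ ?_ t
  · simp
  · intro z y' hz hy'
    simp only [map_add, LinearMap.sub_apply, map_add] at *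
    rw [hz, hy']
  · intro b a
    simp only [LinearMap.sub_apply]
    rw [phi_apply, phi_apply, phi_apply, LinearMap.sub_apply, mul_sub]

lemma phi_mulLeft_comp (hR : IsSkewBicharacter R) (hA : BraidedComm R 𝒜)
    (hB : BraidedComm R ℬ) (bt : BraidedTensor R ℬ 𝒜 𝒯)
    {b : B} (hβ : bt.e (b ⊗ₜ (1 : A)) ∈ 𝒯 (0 : Fin n → ℤ)) (v : A →ₗ[K] T) :
    phi bt (LinearMap.mulLeft K (bt.e (b ⊗ₜ 1)) ∘ₗ v) =
      LinearMap.mulLeft K (bt.e (b ⊗ₜ 1)) ∘ₗ phi bt v := by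
  apply LinearMap.ext; intro t
  refine T_ind bt (P := fun t => phi bt (LinearMap.mulLeft K (bt.e (b ⊗ₜ 1)) ∘ₗ v) t =
    (LinearMap.mulLeft K (bt.e (b ⊗ₜ 1)) ∘ₗ phi bt v) t) ?_ ?_ ?_ t
  · simp
  · intro x y hx hy; simp only [map_add]; rw [hx, hy]
  · intro b' a'
    beta_reduce
    simp only [LinearMap.comp_apply, LinearMap.mulLeft_apply]
    rw [phi_apply, phi_apply]
    simp only [LinearMap.comp_apply, LinearMap.mulLeft_apply]
    rw [← mul_assoc, ← comm_grade0 hR hA hB bt hβ (bt.e (b' ⊗ₜ 1)), mul_assoc]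

lemma phi_comp_mulLeft (hR : IsSkewBicharacter R) (bt : BraidedTensor R ℬ 𝒜 𝒯)
    (v : A →ₗ[K] T) (b : B) :
    phi bt v ∘ₗ LinearMap.mulLeft K (bt.e (b ⊗ₜ (1 : A))) =
      LinearMap.mulLeft K (bt.e (b ⊗ₜ (1 : A))) ∘ₗ phi bt v := by
  apply LinearMap.ext; intro t
  simpa using phi_mulLeft_e hR bt v b t

end Aux

/-- `ᴴDer(A, B ⊔ A)` is a `B⁰`-module with action `(b·v)(a) = (b ⊗ 1) v(a)`,
and the bracket `[v,w] = (μ_B ⊗ id)∘((id ⊗ v)∘w − (id ⊗ w)∘v)` is a well-defined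
`B⁰`-bilinear Lie bracket on it. Here `T` realizes `B ⊔ A` via `bt.e`. -/
theorem stmt13 {n : ℕ} {K : Type*} [Field K]
    (R : (Fin n → ℤ) → (Fin n → ℤ) → Kˣ) (hR : IsSkewBicharacter R)
    {A B T : Type*} [Ring A] [Algebra K A] [Ring B] [Algebra K B] [Ring T] [Algebra K T]
    (𝒜 : (Fin n → ℤ) → Submodule K A) (ℬ : (Fin n → ℤ) → Submodule K B)
    (𝒯 : (Fin n → ℤ) → Submodule K T)
    [GradedAlgebra 𝒜] [GradedAlgebra ℬ]
    (hA : BraidedComm R 𝒜) (hB : BraidedComm R ℬ)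
    (bt : BraidedTensor R ℬ 𝒜 𝒯) :
    -- the B⁰-action is well defined and a module action
    (∀ b ∈ ℬ 0, ∀ v, IsHDer 𝒜 bt.e 𝒯 v → IsHDer 𝒜 bt.e 𝒯 (hderSMul bt.e b v)) ∧
    (∀ v : A →ₗ[K] T, hderSMul bt.e (1 : B) v = v) ∧
    (∀ b b' : B, ∀ v : A →ₗ[K] T,
      hderSMul bt.e (b + b') v = hderSMul bt.e b v + hderSMul bt.e b' v) ∧
    (∀ b ∈ ℬ 0, ∀ b' ∈ ℬ 0, ∀ v : A →ₗ[K] T,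
      hderSMul bt.e (b * b') v = hderSMul bt.e b (hderSMul bt.e b' v)) ∧
    -- the bracket is well defined (Leibniz rule and degree preservation)
    (∀ v w, IsHDer 𝒜 bt.e 𝒯 v → IsHDer 𝒜 bt.e 𝒯 w →
      IsHDer 𝒜 bt.e 𝒯 (hderBracket bt.e v w)) ∧
    -- antisymmetry
    (∀ v w : A →ₗ[K] T, hderBracket bt.e v w = - hderBracket bt.e w v) ∧
    -- Jacobi identity
    (∀ u v w, IsHDer 𝒜 bt.e 𝒯 u → IsHDer 𝒜 bt.e 𝒯 v → IsHDer 𝒜 bt.e 𝒯 w →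
      hderBracket bt.e u (hderBracket bt.e v w) =
        hderBracket bt.e (hderBracket bt.e u v) w +
        hderBracket bt.e v (hderBracket bt.e u w)) ∧
    -- B⁰-bilinearity of the bracket
    (∀ b ∈ ℬ 0, ∀ v w, IsHDer 𝒜 bt.e 𝒯 v → IsHDer 𝒜 bt.e 𝒯 w →
      hderBracket bt.e (hderSMul bt.e b v) w = hderSMul bt.e b (hderBracket bt.e v w) ∧
      hderBracket bt.e v (hderSMul bt.e b w) = hderSMul bt.e b (hderBracket bt.e v w)) := by
  have hBr : ∀ v w : A →ₗ[K] T,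
      hderBracket bt.e v w = phi bt v ∘ₗ w - phi bt w ∘ₗ v := fun _ _ => rfl
  have hSm : ∀ (b : B) (v : A →ₗ[K] T),
      hderSMul bt.e b v = LinearMap.mulLeft K (bt.e (b ⊗ₜ 1)) ∘ₗ v := fun _ _ => rfl
  have hBrApp : ∀ (v w : A →ₗ[K] T) (a : A),
      hderBracket bt.e v w a = phi bt v (w a) - phi bt w (v a) := fun _ _ _ => rfl
  have hβmem : ∀ b ∈ ℬ 0, bt.e (b ⊗ₜ (1 : A)) ∈ 𝒯 (0 : Fin n → ℤ) := by
    intro b hb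
    have := tmul_mem bt hb (SetLike.one_mem_graded 𝒜)
    rwa [add_zero] at this
  refine ⟨?_, ?_, ?_, ?_, ?_, ?_, ?_, ?_⟩
  · -- the smul is well defined
    intro b hb v hv
    have hβ := hβmem b hb
    constructor
    · intro p a ha
      have h1 := mul_mem_T bt hβ (hv.1 p a ha)
      rw [zero_add] at h1
      simpa [hSm, LinearMap.mulLeft_apply] using h1
    · intro a a'
      simp only [hSm, LinearMap.comp_apply, LinearMap.mulLeft_apply]
      rw [hv.2 a a', mul_add]
      have c1 : bt.e (b ⊗ₜ 1) * (v a * bt.e (1 ⊗ₜ a')) =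
          bt.e (b ⊗ₜ 1) * v a * bt.e (1 ⊗ₜ a') := (mul_assoc _ _ _).symm
      have c2 : bt.e (b ⊗ₜ 1) * (bt.e (1 ⊗ₜ a) * v a') =
          bt.e (1 ⊗ₜ a) * (bt.e (b ⊗ₜ 1) * v a') := by
        rw [← mul_assoc, comm_grade0 hR hA hB bt hβ (bt.e (1 ⊗ₜ a)), mul_assoc]
      rw [c1, c2]
  · -- one • v = v
    intro v
    apply LinearMap.ext; intro a
    simp only [hSm, LinearMap.comp_apply, LinearMap.mulLeft_apply]
    rw [bt.one_def, one_mul]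
  · -- additivity
    intro b b' v
    apply LinearMap.ext; intro a
    simp only [hSm, LinearMap.comp_apply, LinearMap.mulLeft_apply, LinearMap.add_apply]
    rw [TensorProduct.add_tmul, map_add, add_mul]
  · -- multiplicativity
    intro b hb b' hb' v
    apply LinearMap.ext; intro a
    simp only [hSm, LinearMap.comp_apply, LinearMap.mulLeft_apply]
    rw [← mulBt hR bt b b' 1, mul_assoc]
  · -- the bracket is well defined
    intro v w hv hw
    constructor
    · intro p a ha
      rw [hBrApp]
      exact Submodule.sub_mem _ (phi_mem bt hv.1 (hw.1 p a ha))
        (phi_mem bt hw.1 (hv.1 p a ha))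
    · intro a a'
      refine homA (𝒜 := 𝒜) (P := fun a => ∀ a', hderBracket bt.e v w (a * a') =
        hderBracket bt.e v w a * bt.e (1 ⊗ₜ a') + bt.e (1 ⊗ₜ a) * hderBracket bt.e v w a')
        ?_ ?_ ?_ a a'
      · intro a'
        simp [TensorProduct.tmul_zero]
      · intro x y hx hy a'
        have hxx := hx a'
        have hyy := hy a'
        simp only [add_mul, map_add, TensorProduct.tmul_add] at *
        rw [hxx, hyy]
        abel
      · intro qa a ha a'
        refine homA (𝒜 := 𝒜) (P := fun a' => hderBracket bt.e v w (a * a') =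
          hderBracket bt.e v w a * bt.e (1 ⊗ₜ a') + bt.e (1 ⊗ₜ a) * hderBracket bt.e v w a')
          ?_ ?_ ?_ a'
        · simp [TensorProduct.tmul_zero]
        · intro x y hx hy
          simp only [mul_add, map_add, TensorProduct.tmul_add, add_mul] at *
          rw [hx, hy]
          abel
        · intro qa' a' ha'
          have hwa' : w a' ∈ 𝒯 qa' := hw.1 _ a' ha'
          have hva' : v a' ∈ 𝒯 qa' := hv.1 _ a' ha'
          beta_reduce
          simp only [hBrApp]
          rw [hw.2 a a', hv.2 a a', map_add, map_add,
            phi_mul_iotaA hR bt hv.2 (w a) a',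
            phi_iotaA_mul hR hA hB bt hv ha hwa',
            phi_mul_iotaA hR bt hw.2 (v a) a',
            phi_iotaA_mul hR hA hB bt hw ha hva',
            sub_mul, mul_sub]
          abel
  · -- antisymmetry
    intro v w
    rw [hBr, hBr]
    exact (neg_sub _ _).symm
  · -- Jacobi
    intro u v w _ _ _
    have hPhiBr : ∀ x y : A →ₗ[K] T, phi bt (hderBracket bt.e x y) =
        phi bt x ∘ₗ phi bt y - phi bt y ∘ₗ phi bt x := by
      intro x y
      rw [hBr x y, phi_sub bt, phi_comp hR bt, phi_comp hR bt]
    rw [hBr u (hderBracket bt.e v w), hPhiBr v w, hBr v w,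
      hBr (hderBracket bt.e u v) w, hPhiBr u v, hBr u v,
      hBr v (hderBracket bt.e u w), hPhiBr u w, hBr u w]
    simp only [LinearMap.comp_sub, LinearMap.sub_comp, LinearMap.comp_assoc]
    abel
  · -- bilinearity
    intro b hb v w hv hw
    have hβ := hβmem b hb
    constructor
    · simp only [hBr, hSm]
      rw [phi_mulLeft_comp hR hA hB bt hβ v]
      rw [show phi bt w ∘ₗ (LinearMap.mulLeft K (bt.e (b ⊗ₜ 1)) ∘ₗ v) =
            LinearMap.mulLeft K (bt.e (b ⊗ₜ 1)) ∘ₗ (phi bt w ∘ₗ v) by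
          rw [← LinearMap.comp_assoc, phi_comp_mulLeft hR bt w b, LinearMap.comp_assoc]]
      rw [LinearMap.comp_assoc, ← LinearMap.comp_sub]
    · simp only [hBr, hSm]
      rw [phi_mulLeft_comp hR hA hB bt hβ w]
      rw [show phi bt v ∘ₗ (LinearMap.mulLeft K (bt.e (b ⊗ₜ 1)) ∘ₗ w) =
            LinearMap.mulLeft K (bt.e (b ⊗ₜ 1)) ∘ₗ (phi bt v ∘ₗ w) by
          rw [← LinearMap.comp_assoc, phi_comp_mulLeft hR bt v b, LinearMap.comp_assoc]]
      rw [LinearMap.comp_assoc, ← LinearMap.comp_sub]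
end
end

section
/- Let F = F_{m₁,…,m_N} be the free braided-commutative ℤⁿ-graded K-algebra with braided partial derivatives ∂ⱼ (degree −mⱼ). For braided derivations L = Σⱼ Lⱼ ∂ⱼ and L' = Σⱼ L'ⱼ ∂ⱼ with homogeneous coefficients Lⱼ, L'ⱼ ∈ F, define the bracket by [L, L'](a) := L(L'(a)) − R(deg L', deg L) L'(L(a)), where deg L := deg Lⱼ − mⱼ (independent of j for homogeneous L). Then [L, L'] is again of the form Σ_k M_k ∂_k with M_k = Σⱼ (Lⱼ ∂ⱼ(L'_k) − R(deg L', deg L) L'ⱼ ∂ⱼ(L_k)); the bracket satisfies braided antisymmetry [L, L'] = −R(deg L', deg L)[L', L] and the braided Jacobi identity [L, [L', L'']] = [[L, L'], L''] + R(deg L', deg L)[L', [L, L'']]. -/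
open scoped TensorProduct
open TensorProduct

noncomputable section

universe u v w

/-- The braided derivation `Σⱼ Lⱼ ∂ⱼ` with coefficients `Lc`. -/
def derOp {K : Type*} [Field K] {F : Type*} [Ring F] [Algebra K F] {N : ℕ}
    (pd : Fin N → (F →ₗ[K] F)) (Lc : Fin N → F) : F →ₗ[K] F :=
  ∑ j, LinearMap.mulLeft K (Lc j) ∘ₗ pd j

/-- The braided bracket `[P,Q] = P∘Q − c Q∘P` (with `c = R(deg Q, deg P)`). -/
def braidedBrk {K : Type*} [Field K] {F : Type*} [Ring F] [Algebra K F]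
    (c : K) (P Q : F →ₗ[K] F) : F →ₗ[K] F :=
  P ∘ₗ Q - c • (Q ∘ₗ P)


section AuxStmt15

variable {n : ℕ} {K : Type*} [Field K] {F : Type*} [Ring F] [Algebra K F]

/-- Leibniz property of degree `d0`. -/
def HLeib (R : (Fin n → ℤ) → (Fin n → ℤ) → Kˣ) (𝒻 : (Fin n → ℤ) → Submodule K F)
    (d0 : Fin n → ℤ) (D : F →ₗ[K] F) : Prop :=
  ∀ p, ∀ a ∈ 𝒻 p, ∀ a' : F, D (a * a') = D a * a' + ((R p d0 : Kˣ) : K) • (a * D a')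

theorem R_zero_left (R : (Fin n → ℤ) → (Fin n → ℤ) → Kˣ) (hR : IsSkewBicharacter R)
    (p : Fin n → ℤ) : R 0 p = 1 := by
  have h : R 0 p * 1 = R 0 p * R 0 p := by
    have := hR.1.1 0 0 p
    simpa using this
  exact (mul_left_cancel h).symm

theorem derOp_apply' {N : ℕ} (pd : Fin N → (F →ₗ[K] F)) (Lc : Fin N → F) (a : F) :
    derOp pd Lc a = ∑ j, Lc j * pd j a := by
  simp [derOp]

theorem derOp_x {N : ℕ} (pd : Fin N → (F →ₗ[K] F)) (x : Fin N → F)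
    (hpdval : ∀ j i, pd j (x i) = if i = j then 1 else 0) (Lc : Fin N → F) (i : Fin N) :
    derOp pd Lc (x i) = Lc i := by
  rw [derOp_apply']
  simp [hpdval]

theorem derOp_deg (𝒻 : (Fin n → ℤ) → Submodule K F) [GradedAlgebra 𝒻]
    {N : ℕ} (m : Fin N → (Fin n → ℤ)) (pd : Fin N → (F →ₗ[K] F))
    (hpddeg : ∀ j p, ∀ a ∈ 𝒻 p, pd j a ∈ 𝒻 (p - m j))
    (d0 : Fin n → ℤ) (Lc : Fin N → F) (hLc : ∀ j, Lc j ∈ 𝒻 (d0 + m j)) :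
    ∀ p, ∀ a ∈ 𝒻 p, derOp pd Lc a ∈ 𝒻 (p + d0) := by
  intro p a ha
  rw [derOp_apply']
  apply Submodule.sum_mem
  intro j _
  have h := SetLike.mul_mem_graded (hLc j) (hpddeg j p a ha)
  have e : (d0 + m j) + (p - m j) = p + d0 := by abel
  rwa [e] at h

theorem derOp_leib (R : (Fin n → ℤ) → (Fin n → ℤ) → Kˣ) (hR : IsSkewBicharacter R)
    (𝒻 : (Fin n → ℤ) → Submodule K F) (hF : BraidedComm R 𝒻)
    {N : ℕ} (m : Fin N → (Fin n → ℤ)) (pd : Fin N → (F →ₗ[K] F))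
    (hpdLeib : ∀ j p, ∀ a ∈ 𝒻 p, ∀ a' : F,
      pd j (a * a') = pd j a * a' + ((R p (-(m j)) : Kˣ) : K) • (a * pd j a'))
    (d0 : Fin n → ℤ) (Lc : Fin N → F) (hLc : ∀ j, Lc j ∈ 𝒻 (d0 + m j)) :
    HLeib R 𝒻 d0 (derOp pd Lc) := by
  intro p a ha a'
  rw [derOp_apply', derOp_apply', derOp_apply', Finset.sum_mul, Finset.mul_sum,
    Finset.smul_sum, ← Finset.sum_add_distrib]
  apply Finset.sum_congr rfl
  intro j _
  have hswap : Lc j * a = ((R p (d0 + m j) : Kˣ) : K) • (a * Lc j) :=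
    hF _ _ _ (hLc j) a ha
  have hco : ((R p (-(m j)) : Kˣ) : K) * ((R p (d0 + m j) : Kˣ) : K)
      = ((R p d0 : Kˣ) : K) := by
    have h := hR.1.2 p (-(m j)) (d0 + m j)
    have e : (-(m j)) + (d0 + m j) = d0 := by abel
    rw [e] at h
    exact_mod_cast h.symm
  rw [hpdLeib j p a ha a', mul_add, ← mul_assoc, mul_smul_comm, ← mul_assoc, hswap,
    smul_mul_assoc, smul_smul, hco, mul_assoc, mul_assoc a (Lc j) ((pd j) a')]

theorem der_unique (R : (Fin n → ℤ) → (Fin n → ℤ) → Kˣ) (hR : IsSkewBicharacter R)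
    (𝒻 : (Fin n → ℤ) → Submodule K F) [GradedAlgebra 𝒻]
    {N : ℕ} (m : Fin N → (Fin n → ℤ)) (x : Fin N → F) (hx : ∀ i, x i ∈ 𝒻 (m i))
    (hgen : Algebra.adjoin K (Set.range x) = ⊤)
    (d0 : Fin n → ℤ) (D1 D2 : F →ₗ[K] F)
    (h1 : HLeib R 𝒻 d0 D1) (h2 : HLeib R 𝒻 d0 D2)
    (hval : ∀ i, D1 (x i) = D2 (x i)) : D1 = D2 := by
  have hone : ∀ D : F →ₗ[K] F, HLeib R 𝒻 d0 D → D 1 = 0 := by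
    intro D hD
    have h := hD 0 1 (SetLike.one_mem_graded 𝒻) 1
    rw [one_mul, mul_one, one_mul, R_zero_left R hR d0] at h
    simp only [Units.val_one, one_smul] at h
    exact left_eq_add.mp h
  have key : ∀ a ∈ Submonoid.closure (Set.range x), D1 a = D2 a ∧ ∃ p, a ∈ 𝒻 p := by
    intro a ha
    induction ha using Submonoid.closure_induction with
    | mem y hy =>
        obtain ⟨i, rfl⟩ := hy
        exact ⟨hval i, m i, hx i⟩
    | one => exact ⟨by rw [hone D1 h1, hone D2 h2], 0, SetLike.one_mem_graded 𝒻⟩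
    | mul y z hy hz ihy ihz =>
        obtain ⟨ey, py, hpy⟩ := ihy
        obtain ⟨ez, pz, hpz⟩ := ihz
        refine ⟨?_, py + pz, SetLike.mul_mem_graded hpy hpz⟩
        rw [h1 py y hpy z, h2 py y hpy z, ey, ez]
  ext a
  have hmem : a ∈ Submodule.span K ((Submonoid.closure (Set.range x) : Submonoid F) : Set F) := by
    rw [← Algebra.adjoin_eq_span]
    have : a ∈ Algebra.adjoin K (Set.range x) := by rw [hgen]; exact Algebra.mem_top
    exact this
  induction hmem using Submodule.span_induction with
  | mem y hy => exact (key y hy).1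
  | zero => simp
  | add y z _ _ ihy ihz => rw [map_add, map_add, ihy, ihz]
  | smul c y _ ih => rw [map_smul, map_smul, ih]

theorem brk_leib (R : (Fin n → ℤ) → (Fin n → ℤ) → Kˣ) (hR : IsSkewBicharacter R)
    (𝒻 : (Fin n → ℤ) → Submodule K F)
    (dA dB : Fin n → ℤ) (D D' : F →ₗ[K] F)
    (hgD : ∀ p, ∀ a ∈ 𝒻 p, D a ∈ 𝒻 (p + dA)) (hgD' : ∀ p, ∀ a ∈ 𝒻 p, D' a ∈ 𝒻 (p + dB))
    (hD : HLeib R 𝒻 dA D) (hD' : HLeib R 𝒻 dB D') :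
    HLeib R 𝒻 (dA + dB) (braidedBrk ((R dB dA : Kˣ) : K) D D') := by
  intro p a ha a'
  have hPc : ((R p (dA + dB) : Kˣ) : K) = ((R p dA : Kˣ) : K) * ((R p dB : Kˣ) : K) := by
    exact_mod_cast hR.1.2 p dA dB
  have hA : ((R (p + dB) dA : Kˣ) : K) = ((R p dA : Kˣ) : K) * ((R dB dA : Kˣ) : K) := by
    exact_mod_cast hR.1.1 p dB dA
  have hB : ((R (p + dA) dB : Kˣ) : K) = ((R p dB : Kˣ) : K) * ((R dA dB : Kˣ) : K) := by
    exact_mod_cast hR.1.1 p dA dB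
  have hs : ((R dA dB : Kˣ) : K) * ((R dB dA : Kˣ) : K) = 1 := by
    rw [← Units.val_mul, hR.2 dA dB, Units.val_one]
  simp only [braidedBrk, LinearMap.sub_apply, LinearMap.smul_apply, LinearMap.comp_apply]
  rw [hD' p a ha a', hD p a ha a', map_add, map_add, map_smul, map_smul,
    hD (p + dB) (D' a) (hgD' p a ha) a', hD p a ha (D' a'),
    hD' (p + dA) (D a) (hgD p a ha) a', hD' p a ha (D a'),
    hPc, hA, hB]
  simp only [sub_mul, smul_mul_assoc, mul_sub, mul_smul_comm, smul_add, smul_sub, smul_smul]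
  match_scalars <;> (try ring) <;> linear_combination (-((R p dB : Kˣ) : K)) * hs

end AuxStmt15

/-- on the free braided-commutative graded algebra, the bracket of braided
derivations `L = Σ Lⱼ ∂ⱼ`, `L' = Σ L'ⱼ ∂ⱼ` is again of this form, with the stated
coefficients, and it satisfies braided antisymmetry and the braided Jacobi identity. -/
theorem stmt15 {n : ℕ} {K : Type*} [Field K]
    (R : (Fin n → ℤ) → (Fin n → ℤ) → Kˣ) (hR : IsSkewBicharacter R)
    {F : Type*} [Ring F] [Algebra K F]
    (𝒻 : (Fin n → ℤ) → Submodule K F) [GradedAlgebra 𝒻] (hF : BraidedComm R 𝒻)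
    {N : ℕ} (m : Fin N → (Fin n → ℤ)) (x : Fin N → F)
    (hx : ∀ i, x i ∈ 𝒻 (m i))
    (hgen : Algebra.adjoin K (Set.range x) = ⊤)
    (pd : Fin N → (F →ₗ[K] F))
    (hpdval : ∀ j i, pd j (x i) = if i = j then 1 else 0)
    (hpddeg : ∀ j p, ∀ a ∈ 𝒻 p, pd j a ∈ 𝒻 (p - m j))
    (hpdLeib : ∀ j p, ∀ a ∈ 𝒻 p, ∀ a' : F,
      pd j (a * a') = pd j a * a' + ((R p (-(m j)) : Kˣ) : K) • (a * pd j a'))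
    (d d' d'' : Fin n → ℤ) (Lc L'c L''c : Fin N → F)
    (hLc : ∀ j, Lc j ∈ 𝒻 (d + m j)) (hL'c : ∀ j, L'c j ∈ 𝒻 (d' + m j))
    (hL''c : ∀ j, L''c j ∈ 𝒻 (d'' + m j)) :
    -- the bracket is again of the form Σ M_k ∂_k with the stated coefficients
    braidedBrk ((R d' d : Kˣ) : K) (derOp pd Lc) (derOp pd L'c) =
      derOp pd (fun k => ∑ j,
        (Lc j * pd j (L'c k) - ((R d' d : Kˣ) : K) • (L'c j * pd j (Lc k)))) ∧
    -- braided antisymmetry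
    braidedBrk ((R d' d : Kˣ) : K) (derOp pd Lc) (derOp pd L'c) =
      - ((R d' d : Kˣ) : K) •
        braidedBrk ((R d d' : Kˣ) : K) (derOp pd L'c) (derOp pd Lc) ∧
    -- braided Jacobi identity
    braidedBrk ((R (d' + d'') d : Kˣ) : K) (derOp pd Lc)
        (braidedBrk ((R d'' d' : Kˣ) : K) (derOp pd L'c) (derOp pd L''c)) =
      braidedBrk ((R d'' (d + d') : Kˣ) : K)
        (braidedBrk ((R d' d : Kˣ) : K) (derOp pd Lc) (derOp pd L'c)) (derOp pd L''c) +
      ((R d' d : Kˣ) : K) •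
        braidedBrk ((R (d + d'') d' : Kˣ) : K) (derOp pd L'c)
          (braidedBrk ((R d'' d : Kˣ) : K) (derOp pd Lc) (derOp pd L''c)) := by
  obtain ⟨⟨hb1, hb2⟩, hskew⟩ := hR
  have hscast : ∀ u v : Fin n → ℤ, ((R u v : Kˣ) : K) * ((R v u : Kˣ) : K) = 1 := by
    intro u v; rw [← Units.val_mul, hskew u v, Units.val_one]
  refine ⟨?_, ?_, ?_⟩
  · -- part 1
    have hMc : ∀ k, (∑ j, (Lc j * pd j (L'c k) -
        ((R d' d : Kˣ) : K) • (L'c j * pd j (Lc k)))) ∈ 𝒻 ((d + d') + m k) := by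
      intro k
      apply Submodule.sum_mem
      intro j _
      apply Submodule.sub_mem
      · have h := SetLike.mul_mem_graded (hLc j) (hpddeg j _ _ (hL'c k))
        have e : (d + m j) + (d' + m k - m j) = (d + d') + m k := by abel
        rwa [e] at h
      · apply Submodule.smul_mem
        have h := SetLike.mul_mem_graded (hL'c j) (hpddeg j _ _ (hLc k))
        have e : (d' + m j) + (d + m k - m j) = (d + d') + m k := by abel
        rwa [e] at h
    apply der_unique R ⟨⟨hb1, hb2⟩, hskew⟩ 𝒻 m x hx hgen (d + d')
    · exact brk_leib R ⟨⟨hb1, hb2⟩, hskew⟩ 𝒻 d d' _ _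
        (derOp_deg 𝒻 m pd hpddeg d Lc hLc) (derOp_deg 𝒻 m pd hpddeg d' L'c hL'c)
        (derOp_leib R ⟨⟨hb1, hb2⟩, hskew⟩ 𝒻 hF m pd hpdLeib d Lc hLc)
        (derOp_leib R ⟨⟨hb1, hb2⟩, hskew⟩ 𝒻 hF m pd hpdLeib d' L'c hL'c)
    · exact derOp_leib R ⟨⟨hb1, hb2⟩, hskew⟩ 𝒻 hF m pd hpdLeib (d + d') _ hMc
    · intro i
      simp only [braidedBrk, LinearMap.sub_apply, LinearMap.smul_apply, LinearMap.comp_apply]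
      rw [derOp_x pd x hpdval L'c i, derOp_x pd x hpdval Lc i,
        derOp_x pd x hpdval _ i, derOp_apply', derOp_apply', Finset.smul_sum,
        ← Finset.sum_sub_distrib]
  · -- part 2: antisymmetry
    have hcc : ((R d' d : Kˣ) : K) * ((R d d' : Kˣ) : K) = 1 := hscast d' d
    rw [braidedBrk, braidedBrk, smul_sub, smul_smul, neg_mul, hcc]
    module
  · -- part 3: Jacobi
    have hc1 : ((R (d' + d'') d : Kˣ) : K) = ((R d' d : Kˣ) : K) * ((R d'' d : Kˣ) : K) := by
      exact_mod_cast hb1 d' d'' d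
    have hc2 : ((R d'' (d + d') : Kˣ) : K) = ((R d'' d : Kˣ) : K) * ((R d'' d' : Kˣ) : K) := by
      exact_mod_cast hb2 d'' d d'
    have hc3 : ((R (d + d'') d' : Kˣ) : K) = ((R d d' : Kˣ) : K) * ((R d'' d' : Kˣ) : K) := by
      exact_mod_cast hb1 d d'' d'
    have hinv : ((R d d' : Kˣ) : K) = ((R d' d : Kˣ) : K)⁻¹ :=
      eq_inv_of_mul_eq_one_left (hscast d d')
    have hne : ((R d' d : Kˣ) : K) ≠ 0 := Units.ne_zero _
    simp only [braidedBrk, LinearMap.comp_sub, LinearMap.sub_comp, LinearMap.comp_smul,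
      LinearMap.smul_comp, smul_sub, smul_smul, LinearMap.comp_assoc, hc1, hc2, hc3, hinv]
    match_scalars <;> field_simp <;> ring
end
end
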